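/- Let (X,p) be a cone-complete TVS-cone metric space over E with cone P, fix e ∈ int P, and let T : X → X and φ : E → E satisfy: φ(P) ⊆ P; φ is increasing on P (if a, b ∈ P and a ≤ b then φ(a) ≤ φ(b)); φ(r·e) ≤ r·φ(e) for every real r ≥ 0; ξ_e(φ(e)) < 1; and p(Tx, Ty) ≤ φ(p(x,y)) for all x, y ∈ X. Then T has a unique fixed point u ∈ X, and for every x ∈ X the sequence of iterates (Tⁿx) cone-converges to u. -/

import Mathlib

open Filter Topology

section Defs

variable {E : Type*} [AddCommGroup E] [Module ℝ E] [TopologicalSpace E]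

/-- `P` is a closed, pointed convex cone with nonempty interior in the TVS `E`. -/
structure IsTVSCone (P : Set E) : Prop where
  add_mem : ∀ ⦃a⦄, a ∈ P → ∀ ⦃b⦄, b ∈ P → a + b ∈ P
  smul_mem : ∀ (r : ℝ), 0 ≤ r → ∀ ⦃a⦄, a ∈ P → r • a ∈ P
  pointed : ∀ a, a ∈ P → -a ∈ P → a = 0
  isClosed : IsClosed P
  int_nonempty : (interior P).Nonempty

/-- `a ≤ b` with respect to the cone `P`. -/
def ConeLe (P : Set E) (a b : E) : Prop := b - a ∈ P

/-- `a ≪ b` with respect to the cone `P`. -/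
def ConeLt (P : Set E) (a b : E) : Prop := b - a ∈ interior P

/-- `p : X × X → E` is a TVS-cone metric over the cone `P`. -/
structure IsConeMetric (P : Set E) {X : Type*} (p : X → X → E) : Prop where
  nonneg : ∀ x y, ConeLe P 0 (p x y)
  eq_zero_iff : ∀ x y, p x y = 0 ↔ x = y
  symm : ∀ x y, p x y = p y x
  triangle : ∀ x y z, ConeLe P (p x y) (p x z + p z y)

/-- The sequence `x` cone-converges to `a`. -/
def ConeConverges (P : Set E) {X : Type*} (p : X → X → E) (x : ℕ → X) (a : X) : Prop :=
  ∀ c, c ∈ interior P → ∃ N, ∀ n ≥ N, ConeLt P (p (x n) a) c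

/-- The sequence `x` is cone-Cauchy. -/
def ConeCauchy (P : Set E) {X : Type*} (p : X → X → E) (x : ℕ → X) : Prop :=
  ∀ c, c ∈ interior P → ∃ N, ∀ n ≥ N, ∀ m ≥ N, ConeLt P (p (x n) (x m)) c

/-- `(X, p)` is cone-complete. -/
def ConeComplete (P : Set E) {X : Type*} (p : X → X → E) : Prop :=
  ∀ x : ℕ → X, ConeCauchy P p x → ∃ a, ConeConverges P p x a

/-- The nonlinear scalarization ξ_e(y) = inf {t : t • e - y ∈ P}. -/
noncomputable def xiScal (P : Set E) (e y : E) : ℝ := sInf {t : ℝ | t • e - y ∈ P}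

/-- The open ball `B(x, c) = {y : p x y ≪ c}`. -/
def coneBall (P : Set E) {X : Type*} (p : X → X → E) (x : X) (c : E) : Set X :=
  {y | ConeLt P (p x y) c}

/-- The cone metric topology `τ_p`, generated by the balls `B(x,c)`, `c ≫ 0`. -/
def coneTopology (P : Set E) {X : Type*} (p : X → X → E) : TopologicalSpace X :=
  TopologicalSpace.generateFrom {s | ∃ x c, c ∈ interior P ∧ s = coneBall P p x c}

end Defs
section Aux

variable {E : Type*} [AddCommGroup E] [Module ℝ E] [TopologicalSpace E]
  [IsTopologicalAddGroup E] [ContinuousSMul ℝ E]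
variable {P : Set E} {a b c e : E}

lemma IsTVSCone.zero_mem' (hP : IsTVSCone P) : (0:E) ∈ P := by
  obtain ⟨a, ha⟩ := hP.int_nonempty
  simpa using hP.smul_mem 0 le_rfl (interior_subset ha)

lemma coneLe_zero_iff' : ConeLe P 0 a ↔ a ∈ P := by simp [ConeLe]

lemma coneLe_trans' (hP : IsTVSCone P) (h1 : ConeLe P a b) (h2 : ConeLe P b c) :
    ConeLe P a c := by
  have := hP.add_mem h2 h1
  simpa [ConeLe, sub_add_sub_cancel] using this

lemma int_add_mem' (hP : IsTVSCone P) (ha : a ∈ interior P) (hb : b ∈ P) :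
    a + b ∈ interior P := by
  have hsub : (fun x => x + b) '' interior P ⊆ P := by
    rintro _ ⟨x, hx, rfl⟩
    exact hP.add_mem (interior_subset hx) hb
  exact interior_maximal hsub ((isOpenMap_add_right b) _ isOpen_interior) ⟨a, ha, rfl⟩

lemma coneLe_lt' (hP : IsTVSCone P) (h1 : ConeLe P a b) (h2 : ConeLt P b c) :
    ConeLt P a c := by
  have := int_add_mem' hP h2 h1
  simpa [ConeLt, sub_add_sub_cancel] using this

lemma coneLe_smul' (hP : IsTVSCone P) {r : ℝ} (hr : 0 ≤ r) (h : ConeLe P a b) :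
    ConeLe P (r • a) (r • b) := by
  have := hP.smul_mem r hr h
  simpa [ConeLe, smul_sub] using this

lemma coneLe_add' (hP : IsTVSCone P) {d : E} (h1 : ConeLe P a b) (h2 : ConeLe P c d) :
    ConeLe P (a + c) (b + d) := by
  have := hP.add_mem h1 h2
  simpa [ConeLe, sub_add_sub_comm] using this

lemma smul_mem_interior' (hP : IsTVSCone P) {r : ℝ} (hr : 0 < r) (ha : a ∈ interior P) :
    r • a ∈ interior P := by
  have hsub : (fun x : E => r • x) '' interior P ⊆ P := by
    rintro _ ⟨x, hx, rfl⟩; exact hP.smul_mem r hr.le (interior_subset hx)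
  exact interior_maximal hsub ((isOpenMap_smul₀ (ne_of_gt hr)) _ isOpen_interior) ⟨a, ha, rfl⟩

lemma exists_scale' (hP : IsTVSCone P) (he : e ∈ interior P) (a : E) :
    ∃ t : ℝ, 0 < t ∧ t • e - a ∈ P := by
  have hcont : Tendsto (fun s : ℝ => e - s • a) (𝓝[>] 0) (𝓝 e) := by
    have h1 : Tendsto (fun s : ℝ => e - s • a) (𝓝 0) (𝓝 (e - (0:ℝ) • a)) :=
      tendsto_const_nhds.sub ((continuous_id.smul continuous_const).tendsto 0)
    simpa using h1.mono_left nhdsWithin_le_nhds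
  have hev := hcont.eventually (isOpen_interior.mem_nhds he)
  obtain ⟨s, hsP, hs⟩ := (hev.and self_mem_nhdsWithin).exists
  have hs' : (0:ℝ) < s := hs
  refine ⟨s⁻¹, inv_pos.2 hs', ?_⟩
  have := hP.smul_mem s⁻¹ (inv_pos.2 hs').le (interior_subset hsP)
  rwa [smul_sub, smul_smul, inv_mul_cancel₀ (ne_of_gt hs'), one_smul] at this

lemma exists_small' (hc : c ∈ interior P) (v : E) :
    ∃ ε : ℝ, 0 < ε ∧ c - ε • v ∈ interior P := by
  have hcont : Tendsto (fun s : ℝ => c - s • v) (𝓝[>] 0) (𝓝 c) := by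
    have h1 : Tendsto (fun s : ℝ => c - s • v) (𝓝 0) (𝓝 (c - (0:ℝ) • v)) :=
      tendsto_const_nhds.sub ((continuous_id.smul continuous_const).tendsto 0)
    simpa using h1.mono_left nhdsWithin_le_nhds
  have hev := hcont.eventually (isOpen_interior.mem_nhds hc)
  obtain ⟨s, hsP, hs⟩ := (hev.and self_mem_nhdsWithin).exists
  exact ⟨s, hs, hsP⟩

lemma eq_zero_of_seq' (hP : IsTVSCone P) {a : E} (ha : a ∈ P) (s : ℕ → ℝ) (e : E)
    (hs : Tendsto s atTop (𝓝 0)) (h : ∀ n, s n • e - a ∈ P) : a = 0 := by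
  have h1 : Tendsto (fun n => s n • e - a) atTop (𝓝 (-a)) := by
    have := (hs.smul_const e).sub (tendsto_const_nhds (x := a))
    simpa using this
  have : -a ∈ P := hP.isClosed.mem_of_tendsto h1 (Filter.Eventually.of_forall h)
  exact hP.pointed a ha this

end Aux

/-- a nonlinear contraction (with `ξ_e (φ e) < 1`) on a cone-complete
TVS-cone metric space has a unique fixed point, and all Picard iterates cone-converge to it. -/
theorem stmt_17 {E X : Type*} [AddCommGroup E] [Module ℝ E] [TopologicalSpace E]
    [IsTopologicalAddGroup E] [ContinuousSMul ℝ E] [T2Space E] [Nonempty X]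
    (P : Set E) (hP : IsTVSCone P) (p : X → X → E) (hp : IsConeMetric P p)
    (hcomplete : ConeComplete P p)
    (e : E) (he : e ∈ interior P) (T : X → X) (φ : E → E)
    (hφP : ∀ a ∈ P, φ a ∈ P)
    (hφmono : ∀ a ∈ P, ∀ b ∈ P, ConeLe P a b → ConeLe P (φ a) (φ b))
    (hφhom : ∀ r : ℝ, 0 ≤ r → ConeLe P (φ (r • e)) (r • φ e))
    (hφlt : xiScal P e (φ e) < 1)
    (hT : ∀ x y : X, ConeLe P (p (T x) (T y)) (φ (p x y))) :
    ∃ u : X, T u = u ∧ (∀ v : X, T v = v → v = u) ∧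
      ∀ x : X, ConeConverges P p (fun n => T^[n] x) u := by
  by_cases h0 : (0:E) ∈ interior P
  · -- degenerate case: E is trivial
    have hE : ∀ a : E, a = 0 := by
      intro a
      have hcont : ∀ b : E, Tendsto (fun s : ℝ => s • b) (𝓝[>] 0) (𝓝 0) := by
        intro b
        have h1 : Tendsto (fun s : ℝ => s • b) (𝓝 0) (𝓝 ((0:ℝ) • b)) :=
          (continuous_id.smul continuous_const).tendsto 0
        simpa using h1.mono_left nhdsWithin_le_nhds
      have hev := ((hcont a).eventually (isOpen_interior.mem_nhds h0)).and
        ((((hcont (-a)).eventually (isOpen_interior.mem_nhds h0)).and self_mem_nhdsWithin))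
      obtain ⟨s, h1, h2, hs⟩ := hev.exists
      have hs' : (0:ℝ) < s := hs
      have := hP.pointed (s • a) (interior_subset h1)
        (by simpa [smul_neg] using interior_subset h2)
      rcases smul_eq_zero.1 this with h | h
      · exact absurd h (ne_of_gt hs')
      · exact h
    have hsub : ∀ x y : X, x = y := fun x y => (hp.eq_zero_iff x y).1 (hE _)
    refine ⟨Classical.arbitrary X, hsub _ _, fun v _ => hsub _ _,
      fun x c hc => ⟨0, fun n _ => ?_⟩⟩
    show c - _ ∈ interior P
    rw [hE (p (T^[n] x) (Classical.arbitrary X)), sub_zero]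
    exact hc
  · -- main case
    have heP : e ∈ P := interior_subset he
    have hφe : φ e ∈ P := hφP e heP
    have hSne : {t : ℝ | t • e - φ e ∈ P}.Nonempty := by
      obtain ⟨t, _, ht⟩ := exists_scale' hP he (φ e)
      exact ⟨t, ht⟩
    have hlb : ∀ s ∈ {t : ℝ | t • e - φ e ∈ P}, (0:ℝ) ≤ s := by
      intro s hs
      by_contra hneg
      push_neg at hneg
      have h1 : s • e ∈ P := by
        have := hP.add_mem hs hφe
        simpa using this
      have heq : (-s)⁻¹ • (s • e) = -e := by
        rw [smul_smul, inv_neg, neg_mul, inv_mul_cancel₀ (ne_of_lt hneg), neg_smul, one_smul]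
      have h2 : -e ∈ P := by
        have := hP.smul_mem (-s)⁻¹ (le_of_lt (inv_pos.2 (neg_pos.2 hneg))) h1
        rwa [heq] at this
      have : e = 0 := hP.pointed e heP h2
      exact h0 (this ▸ he)
    have hlt : sInf {t : ℝ | t • e - φ e ∈ P} < 1 := hφlt
    obtain ⟨k, hkS, hk1⟩ := exists_lt_of_csInf_lt hSne hlt
    have hk0 : (0:ℝ) ≤ k := hlb k hkS
    have hke : ConeLe P (φ e) (k • e) := hkS
    -- key iteration bound
    have key : ∀ x y : X, ∀ t : ℝ, 0 ≤ t → ConeLe P (p x y) (t • e) →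
        ∀ n : ℕ, ConeLe P (p (T^[n] x) (T^[n] y)) ((t * k ^ n) • e) := by
      intro x y t ht h0xy n
      induction n with
      | zero => simpa using h0xy
      | succ n ih =>
        have htk : (0:ℝ) ≤ t * k ^ n := mul_nonneg ht (pow_nonneg hk0 n)
        have h1 : ConeLe P (p (T^[n+1] x) (T^[n+1] y)) (φ (p (T^[n] x) (T^[n] y))) := by
          rw [Function.iterate_succ_apply', Function.iterate_succ_apply']
          exact hT _ _
        have hmem : p (T^[n] x) (T^[n] y) ∈ P := coneLe_zero_iff'.1 (hp.nonneg _ _)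
        have hmem2 : (t * k ^ n) • e ∈ P := hP.smul_mem _ htk heP
        have h2 := hφmono _ hmem _ hmem2 ih
        have h3 := hφhom _ htk
        have h4 := coneLe_smul' hP htk hke
        have h5 : (t * k ^ n) • (k • e) = (t * k ^ (n+1)) • e := by
          rw [smul_smul, mul_assoc, ← pow_succ]
        have h6 := coneLe_trans' hP h1 (coneLe_trans' hP h2 (coneLe_trans' hP h3 h4))
        rwa [h5] at h6
    have hk1' : (0:ℝ) < 1 - k := by linarith
    -- chain bound: p (T^[n] x) (T^[n+j] x) ≤ t k^n (1-k)⁻¹ e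
    have chain : ∀ x : X, ∀ t : ℝ, 0 ≤ t → ConeLe P (p x (T x)) (t • e) →
        ∀ j n : ℕ, ConeLe P (p (T^[n] x) (T^[n+j] x)) ((t * k ^ n * (1-k)⁻¹) • e) := by
      intro x t ht h0x j
      induction j with
      | zero =>
        intro n
        have hz : p (T^[n] x) (T^[n+0] x) = 0 := (hp.eq_zero_iff _ _).2 rfl
        show _ - _ ∈ P
        rw [hz, sub_zero]
        have hnn : (0:ℝ) ≤ t * k ^ n * (1-k)⁻¹ :=
          mul_nonneg (mul_nonneg ht (pow_nonneg hk0 n)) (inv_pos.2 hk1').le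
        exact hP.smul_mem _ hnn heP
      | succ j ih =>
        intro n
        have htri := hp.triangle (T^[n] x) (T^[n+(j+1)] x) (T^[n+1] x)
        have h1 : ConeLe P (p (T^[n] x) (T^[n+1] x)) ((t * k ^ n) • e) := by
          have := key x (T x) t ht h0x n
          rwa [← Function.iterate_succ_apply] at this
        have h2 : ConeLe P (p (T^[n+1] x) (T^[n+(j+1)] x)) ((t * k ^ (n+1) * (1-k)⁻¹) • e) := by
          have := ih (n+1)
          rwa [show n+1+j = n+(j+1) by ring] at this
        have h3 := coneLe_add' hP h1 h2
        have h4 := coneLe_trans' hP htri h3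
        have h5 : (t * k ^ n) • e + (t * k ^ (n+1) * (1-k)⁻¹) • e
            = (t * k ^ n * (1-k)⁻¹) • e := by
          rw [← add_smul]
          congr 1
          field_simp
          ring
        rwa [h5] at h4
    have tendk : Tendsto (fun n : ℕ => k ^ n) atTop (𝓝 0) :=
      tendsto_pow_atTop_nhds_zero_of_lt_one hk0 hk1
    have hsmall : ∀ c : E, c ∈ interior P → ∀ t : ℝ,
        ∃ N, ∀ n ≥ N, c - (t * k ^ n * (1-k)⁻¹) • e ∈ interior P := by
      intro c hc t
      have h2 : Tendsto (fun n : ℕ => t * k ^ n * (1-k)⁻¹) atTop (𝓝 0) := by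
        have := (tendk.const_mul t).mul_const (1-k)⁻¹
        simpa using this
      have h1 : Tendsto (fun n : ℕ => c - (t * k ^ n * (1-k)⁻¹) • e) atTop (𝓝 c) := by
        have h3 := h2.smul_const e
        simpa using tendsto_const_nhds.sub h3
      exact eventually_atTop.1 (h1.eventually (isOpen_interior.mem_nhds hc))
    have hcauchy : ∀ x : X, ConeCauchy P p (fun n => T^[n] x) := by
      intro x
      obtain ⟨t, htpos, hte⟩ := exists_scale' hP he (p x (T x))
      intro c hc
      obtain ⟨N, hN⟩ := hsmall c hc t
      refine ⟨N, ?_⟩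
      have hmono : ∀ n ≥ N, ∀ m, n ≤ m → ConeLt P (p (T^[n] x) (T^[m] x)) c := by
        intro n hn m hnm
        obtain ⟨j, rfl⟩ := Nat.exists_eq_add_of_le hnm
        exact coneLe_lt' hP (chain x t htpos.le hte j n) (hN n hn)
      intro n hn m hm
      rcases le_total n m with h | h
      · exact hmono n hn m h
      · have h7 := hmono m hm n h
        rw [show p (T^[n] x) (T^[m] x) = p (T^[m] x) (T^[n] x) from hp.symm _ _]
        exact h7
    set x₀ : X := Classical.arbitrary X with hx₀
    obtain ⟨u, hu⟩ := hcomplete _ (hcauchy x₀)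
    have hTu : T u = u := by
      have hpu : p u (T u) ∈ P := coneLe_zero_iff'.1 (hp.nonneg _ _)
      have hle : ∀ c ∈ interior P, ConeLe P (p u (T u)) c := by
        intro c hc
        obtain ⟨ε, hεpos, hεc⟩ := exists_small' hc ((1 + k) • e)
        have hεe : ε • e ∈ interior P := smul_mem_interior' hP hεpos he
        obtain ⟨N, hN⟩ := hu (ε • e) hεe
        have h1 : ConeLe P (p (T^[N] x₀) u) (ε • e) := interior_subset (hN N le_rfl)
        have h1' : ConeLe P (p (T^[N+1] x₀) u) (ε • e) :=
          interior_subset (hN (N+1) (Nat.le_succ N))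
        have htri := hp.triangle u (T u) (T^[N+1] x₀)
        have ha : ConeLe P (p u (T^[N+1] x₀)) (ε • e) := by
          rwa [hp.symm] at h1'
        have hb : ConeLe P (p (T^[N+1] x₀) (T u)) ((ε * k) • e) := by
          have hc1 : ConeLe P (p (T^[N+1] x₀) (T u)) (φ (p (T^[N] x₀) u)) := by
            rw [Function.iterate_succ_apply']
            exact hT _ _
          have hmem : p (T^[N] x₀) u ∈ P := coneLe_zero_iff'.1 (hp.nonneg _ _)
          have hmem2 : ε • e ∈ P := hP.smul_mem _ hεpos.le heP
          have hc2 := hφmono _ hmem _ hmem2 h1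
          have hc3 := hφhom ε hεpos.le
          have hc4 := coneLe_smul' hP hεpos.le hke
          have h5 : ε • (k • e) = (ε * k) • e := smul_smul ε k e
          have h6 := coneLe_trans' hP hc1 (coneLe_trans' hP hc2 (coneLe_trans' hP hc3 hc4))
          rwa [h5] at h6
        have hsum := coneLe_add' hP ha hb
        have h6 : ε • e + (ε * k) • e = ε • ((1 + k) • e) := by
          rw [smul_smul, ← add_smul]
          congr 1
          ring
        have h7 := coneLe_trans' hP htri hsum
        rw [h6] at h7
        exact coneLe_trans' hP h7 (interior_subset hεc)
      have hz : p u (T u) = 0 := by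
        refine eq_zero_of_seq' hP hpu (fun n : ℕ => ((n:ℝ)+1)⁻¹) e ?_ ?_
        · simpa [one_div] using tendsto_one_div_add_atTop_nhds_zero_nat (𝕜 := ℝ)
        · intro n
          exact hle _ (smul_mem_interior' hP (by positivity) he)
      exact ((hp.eq_zero_iff _ _).1 hz).symm
    have hconv : ∀ x : X, ConeConverges P p (fun n => T^[n] x) u := by
      intro x c hc
      obtain ⟨t, htpos, hte⟩ := exists_scale' hP he (p x u)
      have hb : ∀ n, ConeLe P (p (T^[n] x) u) ((t * k ^ n) • e) := by
        intro n
        have h8 := key x u t htpos.le hte n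
        rwa [Function.iterate_fixed hTu] at h8
      have h1 : Tendsto (fun n : ℕ => c - (t * k ^ n) • e) atTop (𝓝 c) := by
        have h2 := ((tendk.const_mul t).smul_const e)
        simpa using tendsto_const_nhds.sub h2
      obtain ⟨N, hN⟩ := eventually_atTop.1 (h1.eventually (isOpen_interior.mem_nhds hc))
      exact ⟨N, fun n hn => coneLe_lt' hP (hb n) (hN n hn)⟩
    have huniq : ∀ v : X, T v = v → v = u := by
      intro v hv
      obtain ⟨t, htpos, hte⟩ := exists_scale' hP he (p v u)
      have hb : ∀ n, (t * k ^ n) • e - p v u ∈ P := by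
        intro n
        have h8 := key v u t htpos.le hte n
        rwa [Function.iterate_fixed hv, Function.iterate_fixed hTu] at h8
      have hmem : p v u ∈ P := coneLe_zero_iff'.1 (hp.nonneg _ _)
      have hz : p v u = 0 := eq_zero_of_seq' hP hmem (fun n => t * k ^ n) e
        (by simpa using tendk.const_mul t) hb
      exact (hp.eq_zero_iff _ _).1 hz
    exact ⟨u, hTu, huniq, hconv⟩
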